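/- Consider the RSSD iteration on the unit sphere S^{n−1} (n ≥ 1) applied to a smoothing function f̃ of f : ℝⁿ → ℝ, and let K = {ℓ : ‖η_ℓ‖ ≤ δ_ℓ}. Then any accumulation point x* of the subsequence (x_ℓ)_{ℓ ∈ K} is a stationary point of f associated with f̃ on the sphere: liminf_{x → x*, x ∈ S^{n−1}, μ → 0⁺} ‖Proj_x(∇_x f̃(x, μ))‖ = 0; equivalently, there exist sequences z_k ∈ S^{n−1} with z_k → x* and μ_k → 0⁺ such that Proj_{z_k}(∇_x f̃(z_k, μ_k)) → 0. -/

import Mathlib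

open Filter Topology

/-- The orthogonal projection onto the tangent space of the unit sphere at `x`:
`Proj_x(v) = v − ⟨v, x⟩x`. -/
noncomputable def sphereProj {n : ℕ} (x v : EuclideanSpace ℝ (Fin n)) :
    EuclideanSpace ℝ (Fin n) :=
  v - (inner ℝ v x : ℝ) • x

/-- The RSSD search direction `η = −Proj_x(∇_x f̃(x, μ))` at the point `x` with
smoothing parameter `μ`. -/
noncomputable def rssdDir {n : ℕ} (ft : EuclideanSpace ℝ (Fin n) → ℝ → ℝ)
    (x : EuclideanSpace ℝ (Fin n)) (μ : ℝ) : EuclideanSpace ℝ (Fin n) :=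
  -sphereProj x (gradient (fun y => ft y μ) x)

/-- The Armijo condition at `x ∈ S^{n−1}` with parameter `μ`, stepsize `t`, slope
parameter `σ` and direction `η`, along the retraction `R_x(ξ) = (x+ξ)/‖x+ξ‖`:
`f̃((x + tη)/‖x + tη‖, μ) ≤ f̃(x, μ) − σ t ‖η‖²`. -/
def ArmijoCond {n : ℕ} (ft : EuclideanSpace ℝ (Fin n) → ℝ → ℝ)
    (x : EuclideanSpace ℝ (Fin n)) (μ σ t : ℝ) (η : EuclideanSpace ℝ (Fin n)) : Prop :=
  ft ((‖x + t • η‖)⁻¹ • (x + t • η)) μ ≤ ft x μ - σ * t * ‖η‖ ^ 2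

/-- The RSSD iteration on the unit sphere `S^{n−1}`: parameters
`θ_μ, θ_δ, β, σ ∈ (0,1)`, `ᾱ > 0`; initial data `x 0 ∈ S^{n−1}`, `μ 0 > 0`, `δ 0 > 0`;
`η_ℓ = −Proj_{x_ℓ}(∇_x f̃(x_ℓ, μ_ℓ))`; if `‖η_ℓ‖ ≤ δ_ℓ` then `μ_{ℓ+1} = θ_μ μ_ℓ`,
`δ_{ℓ+1} = θ_δ δ_ℓ`, `x_{ℓ+1} = x_ℓ`; otherwise `μ_{ℓ+1} = μ_ℓ`, `δ_{ℓ+1} = δ_ℓ`, and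
`x_{ℓ+1} = R_{x_ℓ}(β^{m_ℓ} ᾱ η_ℓ)` where `m_ℓ` is the smallest nonnegative integer
satisfying the Armijo condition. -/
structure IsRSSDIteration {n : ℕ} (ft : EuclideanSpace ℝ (Fin n) → ℝ → ℝ)
    (θμ θδ β σ abar : ℝ) (x : ℕ → EuclideanSpace ℝ (Fin n)) (μ δ : ℕ → ℝ) : Prop where
  smooth : ∀ m > (0 : ℝ), ContDiff ℝ 1 (fun y => ft y m)
  hθμ : 0 < θμ ∧ θμ < 1
  hθδ : 0 < θδ ∧ θδ < 1
  hβ : 0 < β ∧ β < 1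
  hσ : 0 < σ ∧ σ < 1
  habar : 0 < abar
  hμ0 : 0 < μ 0
  hδ0 : 0 < δ 0
  sphere : ∀ ℓ, ‖x ℓ‖ = 1
  step_small : ∀ ℓ, ‖rssdDir ft (x ℓ) (μ ℓ)‖ ≤ δ ℓ →
    μ (ℓ + 1) = θμ * μ ℓ ∧ δ (ℓ + 1) = θδ * δ ℓ ∧ x (ℓ + 1) = x ℓ
  step_big : ∀ ℓ, ¬ ‖rssdDir ft (x ℓ) (μ ℓ)‖ ≤ δ ℓ →
    μ (ℓ + 1) = μ ℓ ∧ δ (ℓ + 1) = δ ℓ ∧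
    ∃ m : ℕ,
      ArmijoCond ft (x ℓ) (μ ℓ) σ (β ^ m * abar) (rssdDir ft (x ℓ) (μ ℓ)) ∧
      (∀ j : ℕ, j < m →
        ¬ ArmijoCond ft (x ℓ) (μ ℓ) σ (β ^ j * abar) (rssdDir ft (x ℓ) (μ ℓ))) ∧
      x (ℓ + 1) = (‖x ℓ + (β ^ m * abar) • rssdDir ft (x ℓ) (μ ℓ)‖)⁻¹ •
        (x ℓ + (β ^ m * abar) • rssdDir ft (x ℓ) (μ ℓ))


/-- `ft` is a smoothing function of `f : ℝⁿ → ℝ` with constant `κ > 0` and function `ω`. -/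
def IsSmoothingFun {n : ℕ} (f : EuclideanSpace ℝ (Fin n) → ℝ)
    (ft : EuclideanSpace ℝ (Fin n) → ℝ → ℝ) (κ : ℝ) (ω : ℝ → ℝ) : Prop :=
  0 < κ ∧ (∀ μ > (0 : ℝ), ContDiff ℝ 1 (fun x => ft x μ)) ∧
    (∀ μ > (0 : ℝ), 0 < ω μ) ∧ Filter.Tendsto ω (nhdsWithin 0 (Set.Ioi 0)) (nhds 0) ∧
    ∀ x, ∀ μ > (0 : ℝ), |ft x μ - f x| ≤ κ * ω μ

/-- Any accumulation point `x*` of the subsequence `(x_ℓ)_{ℓ ∈ K}` of the RSSD iterates,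
where `K = {ℓ : ‖η_ℓ‖ ≤ δ_ℓ}`, is a stationary point of `f` associated with the
smoothing function `f̃` on the sphere: there exist sequences `z_k ∈ S^{n−1}` with
`z_k → x*` and `μ_k → 0⁺` such that `Proj_{z_k}(∇_x f̃(z_k, μ_k)) → 0`. -/
theorem rssd_accumulation_point_is_smoothing_stationary (n : ℕ) (hn : 1 ≤ n)
    (f : EuclideanSpace ℝ (Fin n) → ℝ) (ft : EuclideanSpace ℝ (Fin n) → ℝ → ℝ)
    (κ : ℝ) (ω : ℝ → ℝ) (hsm : IsSmoothingFun f ft κ ω)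
    (θμ θδ β σ abar : ℝ) (x : ℕ → EuclideanSpace ℝ (Fin n)) (μ δ : ℕ → ℝ)
    (hiter : IsRSSDIteration ft θμ θδ β σ abar x μ δ)
    (xs : EuclideanSpace ℝ (Fin n)) (φ : ℕ → ℕ) (hφ : StrictMono φ)
    (hφK : ∀ k, ‖rssdDir ft (x (φ k)) (μ (φ k))‖ ≤ δ (φ k))
    (hacc : Filter.Tendsto (fun k => x (φ k)) Filter.atTop (nhds xs)) :
    ∃ (z : ℕ → EuclideanSpace ℝ (Fin n)) (ν : ℕ → ℝ),
      (∀ k, ‖z k‖ = 1) ∧ Filter.Tendsto z Filter.atTop (nhds xs) ∧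
      (∀ k, 0 < ν k) ∧ Filter.Tendsto ν Filter.atTop (nhds 0) ∧
      Filter.Tendsto (fun k => sphereProj (z k) (gradient (fun y => ft y (ν k)) (z k)))
        Filter.atTop (nhds 0) := by
  obtain ⟨hθμ0, hθμ1⟩ := hiter.hθμ
  obtain ⟨hθδ0, hθδ1⟩ := hiter.hθδ
  -- positivity of μ
  have hμpos : ∀ ℓ, 0 < μ ℓ := by
    intro ℓ
    induction ℓ with
    | zero => exact hiter.hμ0
    | succ ℓ ih =>
      by_cases h : ‖rssdDir ft (x ℓ) (μ ℓ)‖ ≤ δ ℓ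
      · rw [(hiter.step_small ℓ h).1]; exact mul_pos hθμ0 ih
      · rw [(hiter.step_big ℓ h).1]; exact ih
  have hδpos : ∀ ℓ, 0 < δ ℓ := by
    intro ℓ
    induction ℓ with
    | zero => exact hiter.hδ0
    | succ ℓ ih =>
      by_cases h : ‖rssdDir ft (x ℓ) (μ ℓ)‖ ≤ δ ℓ
      · rw [(hiter.step_small ℓ h).2.1]; exact mul_pos hθδ0 ih
      · rw [(hiter.step_big ℓ h).2.1]; exact ih
  -- monotonicity
  have hμanti : Antitone μ := by
    apply antitone_nat_of_succ_le
    intro ℓ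
    by_cases h : ‖rssdDir ft (x ℓ) (μ ℓ)‖ ≤ δ ℓ
    · rw [(hiter.step_small ℓ h).1]
      nlinarith [hμpos ℓ]
    · rw [(hiter.step_big ℓ h).1]
  have hδanti : Antitone δ := by
    apply antitone_nat_of_succ_le
    intro ℓ
    by_cases h : ‖rssdDir ft (x ℓ) (μ ℓ)‖ ≤ δ ℓ
    · rw [(hiter.step_small ℓ h).2.1]
      nlinarith [hδpos ℓ]
    · rw [(hiter.step_big ℓ h).2.1]
  -- geometric bounds along φ
  have hμgeo : ∀ k, μ (φ k) ≤ θμ ^ k * μ (φ 0) := by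
    intro k
    induction k with
    | zero => simp
    | succ k ih =>
      have h1 : μ (φ (k + 1)) ≤ μ (φ k + 1) := hμanti (Nat.succ_le_of_lt (hφ (Nat.lt_succ_self k)))
      have h2 : μ (φ k + 1) = θμ * μ (φ k) := (hiter.step_small (φ k) (hφK k)).1
      calc μ (φ (k + 1)) ≤ θμ * μ (φ k) := h1.trans_eq h2
        _ ≤ θμ * (θμ ^ k * μ (φ 0)) := by nlinarith
        _ = θμ ^ (k + 1) * μ (φ 0) := by ring
  have hδgeo : ∀ k, δ (φ k) ≤ θδ ^ k * δ (φ 0) := by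
    intro k
    induction k with
    | zero => simp
    | succ k ih =>
      have h1 : δ (φ (k + 1)) ≤ δ (φ k + 1) := hδanti (Nat.succ_le_of_lt (hφ (Nat.lt_succ_self k)))
      have h2 : δ (φ k + 1) = θδ * δ (φ k) := (hiter.step_small (φ k) (hφK k)).2.1
      calc δ (φ (k + 1)) ≤ θδ * δ (φ k) := h1.trans_eq h2
        _ ≤ θδ * (θδ ^ k * δ (φ 0)) := by nlinarith
        _ = θδ ^ (k + 1) * δ (φ 0) := by ring
  have hμtend : Filter.Tendsto (fun k => μ (φ k)) Filter.atTop (nhds 0) := by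
    have hg : Filter.Tendsto (fun k => θμ ^ k * μ (φ 0)) Filter.atTop (nhds 0) := by
      have := (tendsto_pow_atTop_nhds_zero_of_lt_one hθμ0.le hθμ1).mul_const (μ (φ 0))
      simpa using this
    exact squeeze_zero (fun k => (hμpos (φ k)).le) hμgeo hg
  have hδtend : Filter.Tendsto (fun k => δ (φ k)) Filter.atTop (nhds 0) := by
    have hg : Filter.Tendsto (fun k => θδ ^ k * δ (φ 0)) Filter.atTop (nhds 0) := by
      have := (tendsto_pow_atTop_nhds_zero_of_lt_one hθδ0.le hθδ1).mul_const (δ (φ 0))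
      simpa using this
    exact squeeze_zero (fun k => (hδpos (φ k)).le) hδgeo hg
  refine ⟨fun k => x (φ k), fun k => μ (φ k), fun k => hiter.sphere (φ k), hacc,
    fun k => hμpos (φ k), hμtend, ?_⟩
  apply squeeze_zero_norm (a := fun k => δ (φ k)) _ hδtend
  intro k
  have : sphereProj (x (φ k)) (gradient (fun y => ft y (μ (φ k))) (x (φ k)))
      = -rssdDir ft (x (φ k)) (μ (φ k)) := by simp [rssdDir]
  rw [this, norm_neg]
  exact hφK k
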